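/- Let X and Y be complex Banach spaces, A : X → Y and B, C : Y → X bounded linear operators satisfying A(BA)² = ABACA = ACABA = (AC)²A. Then for every nonzero λ ∈ ℂ, the analytic core K(AC − λ) is closed in Y if and only if the analytic core K(BA − λ) is closed in X. -/

import Mathlib

open ContinuousLinearMap Filter Topology Set

/-- The analytic core `K(T)` : all `x` for which there are `c > 0` and a sequence
`(xₙ)` with `x₀ = x`, `T xₙ₊₁ = xₙ` and `‖xₙ‖ ≤ cⁿ ‖x‖` for all `n`. -/
def analyticCore {E : Type*} [NormedAddCommGroup E] [NormedSpace ℂ E]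
    (T : E →L[ℂ] E) : Set E :=
  {x | ∃ c > (0 : ℝ), ∃ u : ℕ → E, u 0 = x ∧ (∀ n : ℕ, T (u (n + 1)) = u n) ∧
    ∀ n : ℕ, ‖u n‖ ≤ c ^ n * ‖x‖}

section Aux

variable {X Y : Type*} [NormedAddCommGroup X] [NormedSpace ℂ X]
  [NormedAddCommGroup Y] [NormedSpace ℂ Y]

lemma zero_mem_analyticCore (T : X →L[ℂ] X) : (0 : X) ∈ analyticCore T :=
  ⟨1, one_pos, fun _ => 0, rfl, fun _ => map_zero T, fun n => by simp⟩

lemma mem_analyticCore_of_chain (T : X →L[ℂ] X) (x : X) (v : ℕ → X) (R d : ℝ)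
    (hd : 1 ≤ d) (hv0 : v 0 = x) (hvT : ∀ n, T (v (n + 1)) = v n)
    (hb : ∀ n, ‖v n‖ ≤ R * d ^ n * ‖x‖) : x ∈ analyticCore T := by
  refine ⟨d * max 1 R, by positivity, v, hv0, hvT, ?_⟩
  intro n
  cases n with
  | zero => simp [hv0]
  | succ n =>
    have hR : R ≤ (max 1 R) ^ (n + 1) :=
      le_trans (le_max_right 1 R) (le_self_pow₀ (le_max_left 1 R) (Nat.succ_ne_zero n))
    calc ‖v (n + 1)‖ ≤ R * d ^ (n + 1) * ‖x‖ := hb (n + 1)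
      _ ≤ (max 1 R) ^ (n + 1) * d ^ (n + 1) * ‖x‖ := by
          gcongr
      _ = (d * max 1 R) ^ (n + 1) * ‖x‖ := by rw [mul_pow]; ring_nf

lemma analyticCore_map {S : X →L[ℂ] X} {T : Y →L[ℂ] Y} (M : Y →L[ℂ] X)
    (hMT : ∀ y, S (M y) = M (T y)) {y : Y} (hy : y ∈ analyticCore T) :
    M y ∈ analyticCore S := by
  obtain ⟨c, hc, u, hu0, huT, hub⟩ := hy
  by_cases h0 : M y = 0
  · rw [h0]; exact zero_mem_analyticCore S
  have hMy : 0 < ‖M y‖ := norm_pos_iff.mpr h0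
  refine mem_analyticCore_of_chain S (M y) (fun n => M (u n))
    (max 1 (‖M‖ * ‖y‖ / ‖M y‖)) (max 1 c) (le_max_left 1 c)
    (by show M (u 0) = M y; rw [hu0])
    (fun n => by show S (M (u (n + 1))) = M (u n); rw [hMT, huT]) ?_
  intro n
  have h1 : ‖M (u n)‖ ≤ ‖M‖ * (c ^ n * ‖y‖) := by
    refine le_trans (M.le_opNorm _) ?_
    gcongr
    exact hub n
  have h2 : ‖M‖ * ‖y‖ ≤ max 1 (‖M‖ * ‖y‖ / ‖M y‖) * ‖M y‖ :=
    (div_le_iff₀ hMy).mp (le_max_right 1 _)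
  calc ‖M (u n)‖ ≤ ‖M‖ * (c ^ n * ‖y‖) := h1
    _ = c ^ n * (‖M‖ * ‖y‖) := by ring
    _ ≤ (max 1 c) ^ n * (max 1 (‖M‖ * ‖y‖ / ‖M y‖) * ‖M y‖) := by
        exact mul_le_mul (pow_le_pow_left₀ hc.le (le_max_right 1 c) n) h2
          (by positivity) (by positivity)
    _ = max 1 (‖M‖ * ‖y‖ / ‖M y‖) * (max 1 c) ^ n * ‖M y‖ := by ring

lemma core_eq_preimage (T : Y →L[ℂ] Y) (S : X →L[ℂ] X)
    (M : Y →L[ℂ] X) (N : X →L[ℂ] Y) (Q : Y →L[ℂ] Y) (mu : ℂ) (hmu : mu ≠ 0)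
    (hMT : ∀ y, S (M y) = M (T y)) (hNS : ∀ x, T (N x) = N (S x))
    (hNM : ∀ y, N (M y) = mu • y + T (Q y)) (hQT : ∀ y, T (Q y) = Q (T y)) :
    analyticCore T = M ⁻¹' analyticCore S := by
  ext y
  constructor
  · exact fun hy => analyticCore_map M hMT hy
  · intro hy
    obtain ⟨c, hc, u, hu0, huT, hub⟩ := hy
    obtain ⟨v, hv0, hvs⟩ : ∃ v : ℕ → Y, v 0 = y ∧
        ∀ n, v (n + 1) = mu⁻¹ • (N (u (n + 1)) - Q (v n)) :=
      ⟨fun n => Nat.rec y (fun k vk => mu⁻¹ • (N (u (k + 1)) - Q vk)) n, rfl, fun n => rfl⟩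
    set K1 : ℝ := ‖mu‖⁻¹ * (‖N‖ * ‖M‖) with hK1
    set K2 : ℝ := ‖mu‖⁻¹ * ‖Q‖ with hK2
    set d : ℝ := c + K2 + 1 with hdd
    set R : ℝ := max 1 K1 with hRR
    have hK2n : 0 ≤ K2 := by positivity
    have hd1 : 1 ≤ d := by rw [hdd]; linarith
    have hR1 : 1 ≤ R := le_max_left _ _
    have hmun : 0 < ‖mu‖ := norm_pos_iff.mpr hmu
    have hTN : ∀ n, T (N (u (n + 1))) = N (u n) := fun n => by rw [hNS, huT]
    have hTv : ∀ n, T (v (n + 1)) = v n := by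
      intro n
      induction n with
      | zero =>
        rw [hvs 0, map_smul, map_sub, hTN 0, hu0, hNM, hv0]
        rw [add_sub_cancel_right, smul_smul, inv_mul_cancel₀ hmu, one_smul]
      | succ n ih =>
        rw [hvs (n + 1), map_smul, map_sub, hTN (n + 1), hQT, ih, ← hvs n]
    have hbd : ∀ n, ‖v n‖ ≤ R * d ^ n * ‖y‖ := by
      intro n
      induction n with
      | zero =>
        rw [hv0]
        have : (0:ℝ) ≤ ‖y‖ := norm_nonneg y
        nlinarith
      | succ n ih =>
        have hw : ‖N (u (n + 1))‖ ≤ ‖N‖ * (c ^ (n + 1) * (‖M‖ * ‖y‖)) := by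
          refine le_trans (N.le_opNorm _) ?_
          gcongr
          exact le_trans (hub (n + 1)) (by gcongr; exact M.le_opNorm y)
        have hQv : ‖Q (v n)‖ ≤ ‖Q‖ * (R * d ^ n * ‖y‖) :=
          le_trans (Q.le_opNorm _) (mul_le_mul_of_nonneg_left ih Q.opNorm_nonneg)
        have hcled : c ≤ d := by rw [hdd]; linarith
        have hcd : c ^ n ≤ d ^ n := pow_le_pow_left₀ hc.le hcled n
        have t1 : K1 * (c ^ n * c) ≤ R * (d ^ n * c) :=
          mul_le_mul (le_max_right 1 K1)
            (mul_le_mul_of_nonneg_right hcd hc.le) (by positivity) (by positivity)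
        have t1' := mul_le_mul_of_nonneg_right t1 (norm_nonneg y)
        have hnn : (0:ℝ) ≤ R * d ^ n * ‖y‖ := by positivity
        rw [hvs n]
        calc ‖mu⁻¹ • (N (u (n + 1)) - Q (v n))‖
            = ‖mu‖⁻¹ * ‖N (u (n + 1)) - Q (v n)‖ := by rw [norm_smul, norm_inv]
          _ ≤ ‖mu‖⁻¹ * (‖N (u (n + 1))‖ + ‖Q (v n)‖) := by
              gcongr
              exact norm_sub_le _ _
          _ ≤ ‖mu‖⁻¹ * (‖N‖ * (c ^ (n + 1) * (‖M‖ * ‖y‖)) + ‖Q‖ * (R * d ^ n * ‖y‖)) := by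
              gcongr
          _ = K1 * (c ^ n * c) * ‖y‖ + K2 * (R * d ^ n * ‖y‖) := by
              rw [hK1, hK2, pow_succ]; ring
          _ ≤ R * (d ^ n * c) * ‖y‖ + K2 * (R * d ^ n * ‖y‖) := by linarith
          _ ≤ R * (d ^ n * c) * ‖y‖ + K2 * (R * d ^ n * ‖y‖) + R * d ^ n * ‖y‖ :=
              le_add_of_nonneg_right hnn
          _ = R * (d ^ n * (c + K2 + 1)) * ‖y‖ := by ring
          _ = R * d ^ (n + 1) * ‖y‖ := by rw [← hdd, pow_succ]
    exact mem_analyticCore_of_chain T y v R d hd1 hv0 hTv hbd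

end Aux

theorem stmt_11 {X Y : Type*} [NormedAddCommGroup X] [NormedSpace ℂ X] [CompleteSpace X]
    [NormedAddCommGroup Y] [NormedSpace ℂ Y] [CompleteSpace Y]
    (A : X →L[ℂ] Y) (B C : Y →L[ℂ] X)
    (h1 : A ∘L B ∘L A ∘L B ∘L A = A ∘L B ∘L A ∘L C ∘L A)
    (h2 : A ∘L B ∘L A ∘L C ∘L A = A ∘L C ∘L A ∘L B ∘L A)
    (h3 : A ∘L C ∘L A ∘L B ∘L A = A ∘L C ∘L A ∘L C ∘L A)
    (lam : ℂ) (hlam : lam ≠ 0) :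
    IsClosed (analyticCore (A ∘L C - lam • 1)) ↔
      IsClosed (analyticCore (B ∘L A - lam • 1)) := by
  have e1 : ∀ x, A (B (A (B (A x)))) = A (B (A (C (A x)))) := fun x => by
    simpa only [ContinuousLinearMap.comp_apply] using DFunLike.congr_fun h1 x
  have e2 : ∀ x, A (B (A (C (A x)))) = A (C (A (B (A x)))) := fun x => by
    simpa only [ContinuousLinearMap.comp_apply] using DFunLike.congr_fun h2 x
  have e3 : ∀ x, A (C (A (B (A x)))) = A (C (A (C (A x)))) := fun x => by
    simpa only [ContinuousLinearMap.comp_apply] using DFunLike.congr_fun h3 x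
  set M : Y →L[ℂ] X := B ∘L A ∘L C ∘L A ∘L C with hM
  set N : X →L[ℂ] Y := A ∘L C ∘L A with hN
  set QY : Y →L[ℂ] Y :=
    (A ∘L C) ∘L (A ∘L C) ∘L (A ∘L C) + lam • ((A ∘L C) ∘L (A ∘L C))
      + lam ^ 2 • (A ∘L C) + lam ^ 3 • 1 with hQY
  set QX : X →L[ℂ] X :=
    (B ∘L A) ∘L (B ∘L A) ∘L (B ∘L A) + lam • ((B ∘L A) ∘L (B ∘L A))
      + lam ^ 2 • (B ∘L A) + lam ^ 3 • 1 with hQX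
  have hSM : ∀ y : Y, (B ∘L A - lam • 1) (M y) = M ((A ∘L C - lam • 1) y) := by
    intro y
    simp only [hM, sub_apply, smul_apply, one_apply_eq_self, ContinuousLinearMap.comp_apply,
      map_sub, map_smul]
    rw [e2 (C y), e3 (C y)]
  have hTN : ∀ x : X, (A ∘L C - lam • 1) (N x) = N ((B ∘L A - lam • 1) x) := by
    intro x
    simp only [hN, sub_apply, smul_apply, one_apply_eq_self, ContinuousLinearMap.comp_apply,
      map_sub, map_smul]
    rw [e3 x]
  have hNMword : ∀ y : Y, N (M y) = A (C (A (C (A (C (A (C y))))))) := by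
    intro y
    simp only [hM, hN, ContinuousLinearMap.comp_apply]
    rw [e3 (C (A (C y)))]
  have hMNword : ∀ x : X, M (N x) = B (A (B (A (B (A (B (A x))))))) := by
    intro x
    simp only [hM, hN, ContinuousLinearMap.comp_apply]
    rw [← e3 (C (A x)), ← e1 x, ← e2 (B (A x)), ← e2 x, ← e1 x]
  have hpolyY : ∀ y : Y, A (C (A (C (A (C (A (C y))))))) =
      lam ^ 4 • y + (A ∘L C - lam • 1) (QY y) := by
    intro y
    simp only [hQY, sub_apply, add_apply, smul_apply, one_apply_eq_self,
      ContinuousLinearMap.comp_apply, map_add, map_smul, map_sub]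
    module
  have hpolyX : ∀ x : X, B (A (B (A (B (A (B (A x))))))) =
      lam ^ 4 • x + (B ∘L A - lam • 1) (QX x) := by
    intro x
    simp only [hQX, sub_apply, add_apply, smul_apply, one_apply_eq_self,
      ContinuousLinearMap.comp_apply, map_add, map_smul, map_sub]
    module
  have hQTY : ∀ y : Y, (A ∘L C - lam • 1) (QY y) = QY ((A ∘L C - lam • 1) y) := by
    intro y
    simp only [hQY, sub_apply, add_apply, smul_apply, one_apply_eq_self,
      ContinuousLinearMap.comp_apply, map_add, map_smul, map_sub]
    module
  have hQTX : ∀ x : X, (B ∘L A - lam • 1) (QX x) = QX ((B ∘L A - lam • 1) x) := by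
    intro x
    simp only [hQX, sub_apply, add_apply, smul_apply, one_apply_eq_self,
      ContinuousLinearMap.comp_apply, map_add, map_smul, map_sub]
    module
  have key1 : analyticCore (A ∘L C - lam • 1) = M ⁻¹' analyticCore (B ∘L A - lam • 1) :=
    core_eq_preimage _ _ M N QY (lam ^ 4) (pow_ne_zero 4 hlam) hSM hTN
      (fun y => by rw [hNMword y, hpolyY y]) hQTY
  have key2 : analyticCore (B ∘L A - lam • 1) = N ⁻¹' analyticCore (A ∘L C - lam • 1) :=
    core_eq_preimage _ _ N M QX (lam ^ 4) (pow_ne_zero 4 hlam) hTN hSM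
      (fun x => by rw [hMNword x, hpolyX x]) hQTX
  constructor
  · intro h
    rw [key2]
    exact h.preimage N.continuous
  · intro h
    rw [key1]
    exact h.preimage M.continuous
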